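/- For all real x with 0 < |x| < π/2, 2·(sin x / x) + (tan x)/x > 3. -/

import Mathlib

open Real

lemma key_pos (x : ℝ) (hx0 : 0 < x) (hx2 : x < π / 2) :
    2 * Real.sin x + Real.tan x > 3 * x := by
  set f : ℝ → ℝ := fun y => 2 * Real.sin y + Real.tan y - 3 * y with hf
  have hcos : ∀ y ∈ Set.Ico (0:ℝ) (π/2), 0 < Real.cos y := by
    intro y hy
    exact Real.cos_pos_of_mem_Ioo ⟨by linarith [hy.1, Real.pi_pos], hy.2⟩
  have hmono : StrictMonoOn f (Set.Ico 0 (π/2)) := by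
    apply strictMonoOn_of_deriv_pos (convex_Ico 0 (π/2))
    · apply ContinuousOn.sub
      apply ContinuousOn.add
      · exact (continuous_const.mul Real.continuous_sin).continuousOn
      · intro y hy
        exact (Real.continuousAt_tan.2 (hcos y hy).ne').continuousWithinAt
      · exact (continuous_const.mul continuous_id).continuousOn
    · intro y hy
      rw [interior_Ico] at hy
      have hc : 0 < Real.cos y := hcos y ⟨hy.1.le, hy.2⟩
      have hd : HasDerivAt f (2 * Real.cos y + 1 / Real.cos y ^ 2 - 3) y := by
        have h1 := (Real.hasDerivAt_sin y).const_mul 2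
        have h2 := Real.hasDerivAt_tan hc.ne'
        have h3 := (hasDerivAt_id y).const_mul 3
        exact ((h1.add h2).sub h3).congr_deriv (by ring)
      rw [hd.deriv]
      have hc1 : Real.cos y < 1 := by
        have hpi : π / 2 < π := by linarith [Real.pi_pos]
        have := Real.strictAntiOn_cos (by constructor <;> linarith [Real.pi_pos] : (0:ℝ) ∈ Set.Icc 0 π) (⟨hy.1.le, by linarith [hy.2]⟩ : y ∈ Set.Icc 0 π) hy.1
        simpa using this
      have h2 : (2 * Real.cos y + 1 / Real.cos y ^ 2 - 3) * Real.cos y ^ 2 =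
          (Real.cos y - 1)^2 * (2 * Real.cos y + 1) := by
        field_simp; ring
      nlinarith [sq_nonneg (Real.cos y - 1), sq_nonneg (Real.cos y), mul_pos hc hc]
  have h0 : f 0 < f x := hmono ⟨le_refl 0, by linarith [Real.pi_pos]⟩ ⟨hx0.le, hx2⟩ hx0
  simp [hf, Real.tan_zero] at h0
  linarith

lemma key_div (x : ℝ) (hx0 : 0 < x) (hx2 : x < π / 2) :
    2 * (Real.sin x / x) + Real.tan x / x > 3 := by
  have hk := key_pos x hx0 hx2
  rw [gt_iff_lt, mul_div_assoc', ← add_div, lt_div_iff₀ hx0]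
  linarith

theorem stmt_2 (x : ℝ) (h1 : 0 < |x|) (h2 : |x| < π / 2) :
    2 * (sin x / x) + tan x / x > 3 := by
  have hx : x ≠ 0 := by intro h; simp [h] at h1
  rcases hx.lt_or_gt with h | h
  · have hk := key_div (-x) (by linarith) (by rwa [abs_of_neg h] at h2)
    rw [Real.sin_neg, Real.tan_neg, neg_div_neg_eq, neg_div_neg_eq] at hk
    exact hk
  · exact key_div x h (by rwa [abs_of_pos h] at h2)
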